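/- For μ ∈ [-1,1], the function f_μ(z) = z + (μ/2) z² + ((1-μ²)/2) Σ_{k≥1} ((-μ)^{k-1}/(k+1)) z^{k+2} satisfies z f_μ'(z) - f_μ(z) = (1/2) z² (μ + z)/(1 + μ z) for all z in the unit disk, and hence |z f_μ'(z) - f_μ(z)| < 1/2 on the disk, so f_μ ∈ Ω. -/

import Mathlib

open Metric Complex

set_option maxHeartbeats 1000000 in
theorem stmt_11 (μ : ℝ) (hμ : μ ∈ Set.Icc (-1 : ℝ) 1) (f : ℂ → ℂ)
    (hf : ∀ z : ℂ, f z = z + ((μ : ℂ) / 2) * z ^ 2 +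
      ((1 - (μ : ℂ) ^ 2) / 2) * ∑' k : ℕ, ((-(μ : ℂ)) ^ k / (k + 2)) * z ^ (k + 3)) :
    ∀ z ∈ ball (0:ℂ) 1,
      z * deriv f z - f z = (1/2) * z ^ 2 * ((μ : ℂ) + z) / (1 + (μ : ℂ) * z) ∧
      ‖z * deriv f z - f z‖ < 1/2 := by
  obtain ⟨hμ1, hμ2⟩ := hμ
  have hmabs : |μ| ≤ 1 := abs_le.mpr ⟨hμ1, hμ2⟩
  have hmnorm : ‖(μ:ℂ)‖ ≤ 1 := by rwa [Complex.norm_real, Real.norm_eq_abs]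
  intro z hz
  rw [mem_ball, dist_zero_right] at hz
  set m : ℂ := (μ : ℂ) with hm
  set c : ℂ := (1 - m ^ 2) / 2 with hc
  set a : ℕ → ℂ → ℂ := fun k w => ((-m) ^ k / ((k : ℂ) + 2)) * w ^ (k + 3) with ha
  set a' : ℕ → ℂ → ℂ := fun k w => (((k : ℂ) + 3) / ((k : ℂ) + 2)) * (-m) ^ k * w ^ (k + 2)
    with ha'
  have hk2 : ∀ k : ℕ, ((k : ℂ) + 2) ≠ 0 := by
    intro k
    exact_mod_cast (Nat.cast_add_one_ne_zero (k + 1) : ((k + 1 : ℕ) : ℂ) + 1 ≠ 0)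
  have hnormk2 : ∀ k : ℕ, (1 : ℝ) ≤ ‖(k : ℂ) + 2‖ := by
    intro k
    have : ((k : ℂ) + 2) = ((k + 2 : ℕ) : ℂ) := by push_cast; ring
    rw [this, Complex.norm_natCast]
    exact_mod_cast Nat.le_add_left 1 (k + 1)
  have hnmk : ∀ k : ℕ, ‖(-m) ^ k‖ ≤ 1 := by
    intro k
    rw [norm_pow, norm_neg]
    exact pow_le_one₀ (norm_nonneg _) hmnorm
  -- norm bounds
  have habound : ∀ (k : ℕ) (w : ℂ), ‖a k w‖ ≤ ‖w‖ ^ (k + 3) := by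
    intro k w
    simp only [ha, norm_mul, norm_div, norm_pow, norm_neg]
    have h1 : ‖m‖ ^ k ≤ 1 := pow_le_one₀ (norm_nonneg _) hmnorm
    have h2 := hnormk2 k
    have h3 : (0:ℝ) ≤ ‖w‖ ^ (k + 3) := by positivity
    have h4 : ‖m‖ ^ k / ‖(k : ℂ) + 2‖ ≤ 1 := by
      rw [div_le_one (by linarith)]
      linarith
    nlinarith
  have ha'bound : ∀ (k : ℕ) (w : ℂ), ‖a' k w‖ ≤ 2 * ‖w‖ ^ (k + 2) := by
    intro k w
    simp only [ha', norm_mul, norm_div, norm_pow, norm_neg]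
    have h1 : ‖(k : ℂ) + 3‖ / ‖(k : ℂ) + 2‖ ≤ 2 := by
      have e3 : ((k : ℂ) + 3) = ((k + 3 : ℕ) : ℂ) := by push_cast; ring
      have e2 : ((k : ℂ) + 2) = ((k + 2 : ℕ) : ℂ) := by push_cast; ring
      rw [e3, e2, Complex.norm_natCast, Complex.norm_natCast]
      rw [div_le_iff₀ (by positivity)]
      push_cast; linarith
    have h0 : (0:ℝ) ≤ ‖(k : ℂ) + 3‖ / ‖(k : ℂ) + 2‖ := by positivity
    have hm1 : ‖m‖ ^ k ≤ 1 := pow_le_one₀ (norm_nonneg _) hmnorm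
    have hm0 : (0:ℝ) ≤ ‖m‖ ^ k := by positivity
    have h3 : (0:ℝ) ≤ ‖w‖ ^ (k + 2) := by positivity
    have h5 : ‖(k : ℂ) + 3‖ / ‖(k : ℂ) + 2‖ * ‖m‖ ^ k ≤ 2 := by nlinarith
    nlinarith [mul_le_mul_of_nonneg_right h5 h3]
  -- derivative of each term
  have hda : ∀ (k : ℕ) (w : ℂ), HasDerivAt (a k) (a' k w) w := by
    intro k w
    have h := (hasDerivAt_pow (k + 3) w).const_mul ((-m) ^ k / ((k : ℂ) + 2))
    convert h using 1
    · rfl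
    · rfl
    simp only [ha']
    push_cast
    have h2 := hk2 k
    field_simp
  -- summability facts at z
  have hgeo : Summable fun k : ℕ => ‖z‖ ^ k := summable_geometric_of_lt_one (norm_nonneg z) hz
  have hS : Summable fun k => a k z := by
    apply Summable.of_norm
    apply Summable.of_nonneg_of_le (fun k => norm_nonneg _) _ hgeo
    intro k
    exact (habound k z).trans (pow_le_pow_of_le_one (norm_nonneg z) hz.le (by omega))
  have hS' : Summable fun k => a' k z := by
    apply Summable.of_norm
    apply Summable.of_nonneg_of_le (fun k => norm_nonneg _) _ (hgeo.mul_left 2)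
    intro k
    exact (ha'bound k z).trans (by
      have := pow_le_pow_of_le_one (norm_nonneg z) hz.le (show k ≤ k + 2 by omega)
      nlinarith)
  -- derivative of the tsum
  set r : ℝ := (1 + ‖z‖) / 2 with hr
  have hzr : ‖z‖ < r := by rw [hr]; linarith
  have hr1 : r < 1 := by rw [hr]; linarith
  have hr0 : 0 < r := lt_of_le_of_lt (norm_nonneg z) hzr
  have hT : HasDerivAt (fun w => ∑' k, a k w) (∑' k, a' k z) z := by
    apply hasDerivAt_tsum_of_isPreconnected
      (u := fun k : ℕ => 2 * (r ^ 2 * r ^ k)) ?_ isOpen_ball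
      (convex_ball (0:ℂ) r).isPreconnected ?_ ?_ (mem_ball_self hr0) ?_ ?_
    · exact ((summable_geometric_of_lt_one hr0.le hr1).mul_left (r ^ 2)).mul_left 2
    · intro k w _; exact hda k w
    · intro k w hw
      rw [mem_ball, dist_zero_right] at hw
      refine (ha'bound k w).trans ?_
      have : ‖w‖ ^ (k + 2) ≤ r ^ (k + 2) := pow_le_pow_left₀ (norm_nonneg w) hw.le _
      calc 2 * ‖w‖ ^ (k + 2) ≤ 2 * r ^ (k + 2) := by linarith
        _ = 2 * (r ^ 2 * r ^ k) := by ring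
    · have : ∀ k : ℕ, a k 0 = 0 := by intro k; simp [ha]
      simpa [this] using summable_zero
    · rwa [mem_ball, dist_zero_right]
  -- derivative of f
  have hfe : f = fun w => w + (m / 2) * w ^ 2 + c * ∑' k, a k w := funext hf
  have hdf : HasDerivAt f (1 + m * z + c * ∑' k, a' k z) z := by
    rw [hfe]
    have h1 : HasDerivAt (fun w : ℂ => w) 1 z := hasDerivAt_id z
    have h2 : HasDerivAt (fun w : ℂ => (m / 2) * w ^ 2) (m * z) z := by
      have := (hasDerivAt_pow 2 z).const_mul (m / 2)
      convert this using 1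
      · rfl
      · rfl
      push_cast; ring
    have h3 : HasDerivAt (fun w : ℂ => c * ∑' k, a k w) (c * ∑' k, a' k z) z :=
      hT.const_mul c
    exact (h1.add h2).add h3
  have hderiv : deriv f z = 1 + m * z + c * ∑' k, a' k z := hdf.deriv
  -- geometric series value
  have hmz : ‖-(m * z)‖ < 1 := by
    rw [norm_neg, norm_mul]
    calc ‖m‖ * ‖z‖ ≤ 1 * ‖z‖ := by gcongr
      _ = ‖z‖ := one_mul _
      _ < 1 := hz
  have hden : (1 : ℂ) + m * z ≠ 0 := by
    intro h
    have : -(m * z) = 1 := by linear_combination -h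
    rw [this] at hmz
    simp at hmz
  -- key identity
  have hkey : z * (∑' k, a' k z) - (∑' k, a k z) = z ^ 3 * (1 + m * z)⁻¹ := by
    have h1 : z * (∑' k, a' k z) = ∑' k, z * a' k z := (tsum_mul_left).symm
    rw [h1, ← Summable.tsum_sub (hS'.mul_left z) hS]
    have h2 : ∀ k : ℕ, z * a' k z - a k z = z ^ 3 * (-(m * z)) ^ k := by
      intro k
      simp only [ha, ha']
      have h3 := hk2 k
      field_simp
      ring
    rw [tsum_congr h2, tsum_mul_left, tsum_geometric_of_norm_lt_one hmz]
    congr 1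
    rw [sub_neg_eq_add]
  -- the equality
  have heq : z * deriv f z - f z = (1/2) * z ^ 2 * (m + z) / (1 + m * z) := by
    rw [hderiv, hf z]
    have : z * (1 + m * z + c * ∑' k, a' k z) -
        (z + (m / 2) * z ^ 2 + c * ∑' k, a k z) =
        (m / 2) * z ^ 2 + c * (z * (∑' k, a' k z) - ∑' k, a k z) := by ring
    rw [this, hkey, hc]
    field_simp
    ring
  refine ⟨heq, ?_⟩
  rw [heq]
  -- norm estimate
  have hnum : ‖m + z‖ ≤ ‖1 + m * z‖ := by
    have hsq : ‖m + z‖ ^ 2 ≤ ‖1 + m * z‖ ^ 2 := by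
      rw [← Complex.normSq_eq_norm_sq,
        ← Complex.normSq_eq_norm_sq]
      have hz2 : Complex.normSq z < 1 := by
        rw [Complex.normSq_eq_norm_sq]
        nlinarith [norm_nonneg z, hz]
      simp only [Complex.normSq_apply, Complex.add_re, Complex.add_im, Complex.mul_re,
        Complex.mul_im, Complex.one_re, Complex.one_im, hm, Complex.ofReal_re,
        Complex.ofReal_im] at hz2 ⊢
      nlinarith [mul_nonneg (show (0:ℝ) ≤ 1 - μ ^ 2 by nlinarith)
        (show (0:ℝ) ≤ 1 - (z.re * z.re + z.im * z.im) by linarith)]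
    nlinarith [norm_nonneg (m + z), norm_nonneg (1 + m * z)]
  have hdenpos : 0 < ‖1 + m * z‖ := norm_pos_iff.mpr hden
  rw [norm_div, norm_mul, norm_mul, div_lt_iff₀ hdenpos]
  have h12 : ‖(1 : ℂ) / 2‖ = 1 / 2 := by norm_num
  rw [h12, norm_pow]
  have hz2 : ‖z‖ ^ 2 < 1 := by nlinarith [norm_nonneg z]
  nlinarith [norm_nonneg (m + z), norm_nonneg z]
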